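/- Let p ∈ ℂ, r > 0, and let u be a real-valued continuously differentiable function on an open set containing the circle {z : |z − p| = r}. Define the Wirtinger derivative ∂u/∂z = (1/2)(∂u/∂x − I·∂u/∂y), where x = Re z and y = Im z. Then Re ∮_{C(p,r)} (∂u/∂z)(z) dz = 0. (Hence, in the Laurent-type decomposition of g = ∂u/∂z, the coefficients a_{i,1} — the residues of g on the inner circles — are real.) -/

import Mathlib

noncomputable section

open Complex

/-- The Wirtinger derivative `∂u/∂z = (1/2)(∂u/∂x − I·∂u/∂y)` of a real-valued
function `u` on `ℂ`, as a complex number. -/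
def wirtinger (u : ℂ → ℝ) (z : ℂ) : ℂ :=
  (1 / 2 : ℂ) * ((fderiv ℝ u z 1 : ℝ) - Complex.I * ((fderiv ℝ u z Complex.I : ℝ) : ℂ))

/-- For a real-valued `C¹` function `u` defined near the circle `|z − p| = r`,
the real part of `∮_{C(p,r)} (∂u/∂z) dz` vanishes. -/
theorem re_circleIntegral_wirtinger_eq_zero (p : ℂ) (r : ℝ) (hr : 0 < r)
    (u : ℂ → ℝ) (U : Set ℂ) (hU : IsOpen U) (hsub : Metric.sphere p r ⊆ U)
    (hu : ContDiffOn ℝ 1 u U) :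
    (∮ z in C(p, r), wirtinger u z).re = 0 := by
  have hmem : ∀ θ : ℝ, circleMap p r θ ∈ U := fun θ =>
    hsub (circleMap_mem_sphere p hr.le θ)
  set F : ℝ → ℂ →L[ℝ] ℝ := fun θ => fderiv ℝ u (circleMap p r θ) with hF
  have hFcont : Continuous F :=
    (hu.continuousOn_fderiv_of_isOpen hU le_rfl).comp_continuous
      (continuous_circleMap p r) hmem
  set c : ℝ → ℂ := fun θ => circleMap 0 r θ * Complex.I with hc
  have hccont : Continuous c := (continuous_circleMap 0 r).mul continuous_const
  set D : ℝ → ℝ := fun θ => F θ (c θ) with hD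
  have hDcont : Continuous D := hFcont.clm_apply hccont
  -- derivative of u along the circle
  have hg : ∀ θ : ℝ, HasDerivAt (fun t => u (circleMap p r t)) (D θ) θ := by
    intro θ
    have hdu : DifferentiableAt ℝ u (circleMap p r θ) :=
      (hu.differentiableOn one_ne_zero).differentiableAt (hU.mem_nhds (hmem θ))
    exact hdu.hasFDerivAt.comp_hasDerivAt θ (hasDerivAt_circleMap p r θ)
  -- the integrand is continuous
  have hicont : Continuous fun θ : ℝ =>
      deriv (circleMap p r) θ • wirtinger u (circleMap p r θ) := by
    have h1 : Continuous fun θ : ℝ => (F θ 1 : ℝ) :=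
      hFcont.clm_apply continuous_const
    have h2 : Continuous fun θ : ℝ => (F θ Complex.I : ℝ) :=
      hFcont.clm_apply continuous_const
    simp only [deriv_circleMap, wirtinger, smul_eq_mul]
    exact ((continuous_circleMap 0 r).mul continuous_const).mul
      (continuous_const.mul ((Complex.continuous_ofReal.comp h1).sub
        (continuous_const.mul (Complex.continuous_ofReal.comp h2))))
  have hInt : IntervalIntegrable
      (fun θ : ℝ => deriv (circleMap p r) θ • wirtinger u (circleMap p r θ))
      MeasureTheory.volume 0 (2 * Real.pi) := hicont.intervalIntegrable _ _
  rw [circleIntegral, ← Complex.reCLM_apply,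
    ← ContinuousLinearMap.intervalIntegral_comp_comm _ hInt]
  have key : ∀ θ : ℝ,
      Complex.reCLM (deriv (circleMap p r) θ • wirtinger u (circleMap p r θ))
        = (1 / 2 : ℝ) * D θ := by
    intro θ
    have hceq : c θ = ((c θ).re : ℂ) + (c θ).im • Complex.I := by
      simp [Complex.ext_iff]
    have hDval : D θ = (c θ).re * F θ 1 + (c θ).im * F θ Complex.I := by
      show F θ (c θ) = _
      conv_lhs => rw [hceq]
      have : ((c θ).re : ℂ) = (c θ).re • (1 : ℂ) := by simp
      rw [this, map_add, map_smul, map_smul, smul_eq_mul, smul_eq_mul]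
    simp only [deriv_circleMap, Complex.reCLM_apply, smul_eq_mul, wirtinger, ← hc]
    rw [hDval]
    simp only [hc, Complex.mul_re, Complex.mul_im, Complex.I_re, Complex.I_im,
      Complex.ofReal_re, Complex.ofReal_im, Complex.sub_re, Complex.sub_im,
      Complex.one_re, Complex.one_im, Complex.div_re, Complex.div_im,
      Complex.I_re, Complex.I_im]
    norm_num
    ring
  rw [intervalIntegral.integral_congr (fun θ _ => key θ),
    intervalIntegral.integral_const_mul,
    intervalIntegral.integral_eq_sub_of_hasDerivAt (fun θ _ => hg θ)
      (hDcont.intervalIntegrable _ _)]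
  have : circleMap p r (2 * Real.pi) = circleMap p r 0 := by
    simpa using (periodic_circleMap p r) 0
  rw [this]
  ring
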